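/- The four vectors r_α(u), r_{−α}(u), r_β(u), r_{−β}(u) are linearly independent over ℤ (i.e., if a·r_α(u) + b·r_{−α}(u) + c·r_β(u) + d·r_{−β}(u) = 0 with a,b,c,d ∈ ℤ, then a = b = c = d = 0), where u is any unit vector in ℝ², α = arccos(1/(2√3)) − π/6, and β = α + π/3. -/

import Mathlib

noncomputable def rot (θ : ℝ) (u : ℂ) : ℂ := Complex.exp (θ * Complex.I) * u
noncomputable def angA : ℝ := Real.arccos (1 / (2 * Real.sqrt 3)) - Real.pi / 6
noncomputable def angB : ℝ := angA + Real.pi / 3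

lemma s3_sq : Real.sqrt 3 * Real.sqrt 3 = 3 := Real.mul_self_sqrt (by norm_num)
lemma s3_pos : 0 < Real.sqrt 3 := Real.sqrt_pos.mpr (by norm_num)
lemma s33_eq : Real.sqrt 3 * Real.sqrt 11 = Real.sqrt 33 := by
  rw [← Real.sqrt_mul (by norm_num)]; norm_num
lemma s99_eq : Real.sqrt 33 * Real.sqrt 3 = 3 * Real.sqrt 11 := by
  rw [← s33_eq]; linear_combination Real.sqrt 11 * s3_sq

lemma inv_s3 : 1 / (2 * Real.sqrt 3) = Real.sqrt 3 / 6 := by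
  rw [div_eq_div_iff (by positivity) (by norm_num)]
  linear_combination -2 * s3_sq

lemma sin_arcc : Real.sin (Real.arccos (1 / (2 * Real.sqrt 3))) = Real.sqrt 33 / 6 := by
  rw [Real.sin_arccos]
  have h1 : 1 - (1 / (2 * Real.sqrt 3))^2 = 33/36 := by
    rw [inv_s3]; ring_nf; linear_combination -(1/36) * s3_sq
  have h2 : Real.sqrt 36 = 6 := by
    rw [show (36:ℝ) = 6^2 by norm_num, Real.sqrt_sq (by norm_num)]
  rw [h1, Real.sqrt_div (by norm_num), h2]

lemma cos_arcc : Real.cos (Real.arccos (1 / (2 * Real.sqrt 3))) = 1 / (2 * Real.sqrt 3) := by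
  apply Real.cos_arccos
  · have : (0:ℝ) ≤ 1 / (2 * Real.sqrt 3) := by positivity
    linarith
  · rw [div_le_one (by positivity)]
    nlinarith [s3_sq, s3_pos]

lemma cosA : Real.cos angA = 1/4 + Real.sqrt 33/12 := by
  rw [angA, Real.cos_sub, cos_arcc, sin_arcc, Real.cos_pi_div_six, Real.sin_pi_div_six, inv_s3]
  linear_combination (1/12) * s3_sq

lemma sinA : Real.sin angA = Real.sqrt 11/4 - Real.sqrt 3/12 := by
  rw [angA, Real.sin_sub, cos_arcc, sin_arcc, Real.cos_pi_div_six, Real.sin_pi_div_six, inv_s3]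
  linear_combination (1/12) * s99_eq

lemma cosB : Real.cos angB = 1/4 - Real.sqrt 33/12 := by
  rw [angB, Real.cos_add, cosA, sinA, Real.cos_pi_div_three, Real.sin_pi_div_three]
  linear_combination (1/24) * s3_sq - (1/8) * s33_eq

lemma sinB : Real.sin angB = Real.sqrt 11/4 + Real.sqrt 3/12 := by
  rw [angB, Real.sin_add, cosA, sinA, Real.cos_pi_div_three, Real.sin_pi_div_three]
  linear_combination (1/24) * s99_eq

lemma irr33 : Irrational (Real.sqrt 33) := by
  rw [show (33:ℝ) = ((33:ℕ):ℝ) by norm_num]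
  refine irrational_sqrt_natCast_iff.mpr ?_
  rintro ⟨r, hr⟩
  have : r ≤ 6 := by nlinarith
  interval_cases r <;> omega

lemma int_comb (k m : ℤ) (h : (k:ℝ) * Real.sqrt 33 + m = 0) : k = 0 ∧ m = 0 := by
  have hk : k = 0 := by
    by_contra hk
    have h1 : Irrational ((k:ℝ) * Real.sqrt 33 + m) := (irr33.intCast_mul hk).add_intCast m
    rw [h] at h1
    exact h1.ne_int 0 (by norm_num)
  refine ⟨hk, ?_⟩
  rw [hk] at h
  norm_num at h
  exact_mod_cast h

theorem stmt2 (u : ℂ) (hu : ‖u‖ = 1) (a b c d : ℤ)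
    (h : (a : ℂ) * rot angA u + (b : ℂ) * rot (-angA) u + (c : ℂ) * rot angB u +
      (d : ℂ) * rot (-angB) u = 0) :
    a = 0 ∧ b = 0 ∧ c = 0 ∧ d = 0 := by
  have hu0 : u ≠ 0 := by intro h0; rw [h0] at hu; simp at hu
  have h' : ((a : ℂ) * Complex.exp (angA * Complex.I) + (b : ℂ) * Complex.exp ((-angA : ℝ) * Complex.I) +
      (c : ℂ) * Complex.exp (angB * Complex.I) + (d : ℂ) * Complex.exp ((-angB : ℝ) * Complex.I)) * u = 0 := by
    rw [← h]; unfold rot; ring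
  have h2 := (mul_eq_zero.1 h').resolve_right hu0
  have e : ∀ θ:ℝ, Complex.exp (↑θ*Complex.I) = ↑(Real.cos θ) + ↑(Real.sin θ)*Complex.I := fun θ => by
    rw [Complex.exp_mul_I, Complex.ofReal_cos, Complex.ofReal_sin]
  rw [e, e, e, e, Complex.ext_iff] at h2
  obtain ⟨hre, him⟩ := h2
  simp [Complex.add_re, Complex.add_im, Complex.mul_re, Complex.mul_im,
    Real.cos_neg, Real.sin_neg] at hre him
  simp only [Complex.cos_ofReal_re, Complex.sin_ofReal_re] at hre him
  rw [cosA, cosB] at hre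
  rw [sinA, sinB] at him
  have H1 := int_comb (a+b-c-d) (3*(a+b+c+d)) (by push_cast; linear_combination 12*hre)
  have H2 := int_comb (3*(a-b+c-d)) (3*(-a+b+c-d)) (by
    push_cast
    linear_combination (12*Real.sqrt 3)*him - (3*((a:ℝ)-b+c-d))*s33_eq - ((-(a:ℝ)+b+c-d))*s3_sq)
  obtain ⟨H1a, H1b⟩ := H1
  obtain ⟨H2a, H2b⟩ := H2
  refine ⟨by omega, by omega, by omega, by omega⟩
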